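/- Let v > 0 and γ > 0, and define P(a) := (1/(πv)) ∫_{{z ∈ ℂ : |z| > γ}} exp(-|z-a|²/v) dν(z) for a ∈ ℂ, where ν is the Lebesgue measure on ℂ. Then inf over a ∈ ℂ of P(a) equals exp(-γ²/v), and this infimum is attained at a = 0. -/

import Mathlib

open MeasureTheory Set Filter Metric Real

/-- Gaussian integrability on `ℂ`. -/
lemma worst_case_aux_integrable (v : ℝ) (hv : 0 < v) (a : ℂ) :
    Integrable (fun z : ℂ => Real.exp (-‖z - a‖ ^ 2 / v)) := by
  have hb : (0:ℝ) < 1 / v := by positivity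
  have h := (GaussianFourier.integrable_cexp_neg_mul_sq_norm_add (V := ℂ)
    (b := ((1 / v : ℝ) : ℂ)) (by simpa using hb) 0 (0 : ℂ)).norm
  have base : Integrable (fun z : ℂ => Real.exp (-‖z‖ ^ 2 / v)) := by
    refine h.congr (ae_of_all _ fun z => ?_)
    simp only [zero_mul, add_zero, Complex.norm_exp]
    congr 1
    simp only [← Complex.ofReal_pow, ← Complex.ofReal_neg, ← Complex.ofReal_mul,
      Complex.ofReal_re]
    field_simp
  simpa using base.comp_sub_right a

/-- Layer-cake comparison: the centered Gaussian has the smallest mass outside the disk. -/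
lemma worst_case_aux_mono (v γ : ℝ) (hv : 0 < v) (a : ℂ) :
    ∫⁻ z in {z : ℂ | γ < ‖z‖}, ENNReal.ofReal (Real.exp (-‖z - (0:ℂ)‖ ^ 2 / v)) ≤
    ∫⁻ z in {z : ℂ | γ < ‖z‖}, ENNReal.ofReal (Real.exp (-‖z - a‖ ^ 2 / v)) := by
  have hS : {z : ℂ | γ < ‖z‖} = (Metric.closedBall (0:ℂ) γ)ᶜ := by
    ext z; simp [not_le]
  set μ : Measure ℂ := volume.restrict {z : ℂ | γ < ‖z‖} with hμ
  have hcont : ∀ b : ℂ, Continuous (fun z : ℂ => Real.exp (-‖z - b‖ ^ 2 / v)) := by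
    intro b; fun_prop
  have hlevel : ∀ (b : ℂ) (t : ℝ), 0 < t →
      {z : ℂ | t < Real.exp (-‖z - b‖ ^ 2 / v)} =
        Metric.ball b (Real.sqrt (-(v * Real.log t))) := by
    intro b t ht
    ext z
    simp only [mem_setOf_eq, Metric.mem_ball, dist_eq_norm]
    rw [Real.lt_sqrt (norm_nonneg _), ← Real.log_lt_iff_lt_exp ht, lt_div_iff₀ hv]
    constructor <;> intro h <;> nlinarith
  have key : ∀ b : ℂ,
      ∫⁻ z in {z : ℂ | γ < ‖z‖}, ENNReal.ofReal (Real.exp (-‖z - b‖ ^ 2 / v)) =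
      ∫⁻ t in Ioi (0:ℝ),
        volume (Metric.ball b (Real.sqrt (-(v * Real.log t))) \ Metric.closedBall (0:ℂ) γ) := by
    intro b
    rw [lintegral_eq_lintegral_meas_lt μ
      (ae_of_all _ fun z => (Real.exp_pos _).le) (hcont b).aemeasurable.restrict]
    refine lintegral_congr_ae ?_
    refine (ae_restrict_iff' measurableSet_Ioi).2 (ae_of_all _ fun t ht => ?_)
    dsimp only
    rw [hlevel b t ht, hμ, Measure.restrict_apply measurableSet_ball, hS, ← diff_eq]
  rw [key 0, key a]
  refine lintegral_mono fun t => ?_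
  set ρ := Real.sqrt (-(v * Real.log t)) with hρ
  rcases le_or_gt ρ γ with h | h
  · have : Metric.ball (0:ℂ) ρ \ Metric.closedBall (0:ℂ) γ = ∅ :=
      diff_eq_empty.2 (Metric.ball_subset_closedBall.trans
        (Metric.closedBall_subset_closedBall h))
    rw [this, measure_empty]
    exact zero_le
  · rw [measure_diff (Metric.closedBall_subset_ball h)
      measurableSet_closedBall.nullMeasurableSet measure_closedBall_lt_top.ne]
    calc volume (Metric.ball (0:ℂ) ρ) - volume (Metric.closedBall (0:ℂ) γ)
        = volume (Metric.ball a ρ) - volume (Metric.closedBall (0:ℂ) γ) := by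
          rw [Complex.volume_ball, Complex.volume_ball]
      _ ≤ _ := le_measure_diff

/-- Explicit computation of the centered Gaussian mass outside the disk of radius `γ`. -/
lemma worst_case_aux_P0 (v γ : ℝ) (hv : 0 < v) (hγ : 0 < γ) :
    ∫ z in {z : ℂ | γ < ‖z‖}, Real.exp (-‖z‖ ^ 2 / v) = π * v * Real.exp (-γ ^ 2 / v) := by
  have hIoi : ∫ r in Ioi γ, r * Real.exp (-r ^ 2 / v) = v / 2 * Real.exp (-γ ^ 2 / v) := by
    have hderiv : ∀ x ∈ Ioi γ, HasDerivAt (fun r : ℝ => -(v / 2) * Real.exp (-r ^ 2 / v))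
        (x * Real.exp (-x ^ 2 / v)) x := by
      intro x _
      have h1 : HasDerivAt (fun r : ℝ => -r ^ 2 / v) (-(2 * x) / v) x := by
        simpa using ((hasDerivAt_pow 2 x).neg.div_const v)
      have h2 := (h1.exp).const_mul (-(v / 2))
      exact h2.congr_deriv (by
        rw [show -(v / 2) * (Real.exp (-x ^ 2 / v) * (-(2 * x) / v)) =
          x * Real.exp (-x ^ 2 / v) * (v / v) by ring, div_self hv.ne', mul_one])
    have hint : IntegrableOn (fun r : ℝ => r * Real.exp (-r ^ 2 / v)) (Ioi γ) := by
      have := (integrable_mul_exp_neg_mul_sq (b := 1 / v) (by positivity)).integrableOn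
        (s := Ioi γ)
      refine this.congr_fun (fun x _ => ?_) measurableSet_Ioi
      ring_nf
    have htend : Tendsto (fun r : ℝ => -(v / 2) * Real.exp (-r ^ 2 / v)) atTop (nhds 0) := by
      have h1 : Tendsto (fun r : ℝ => -r ^ 2 / v) atTop atBot := by
        apply Tendsto.atBot_div_const hv
        exact tendsto_neg_atBot_iff.2 (tendsto_pow_atTop two_ne_zero)
      have := (Real.tendsto_exp_atBot.comp h1).const_mul (-(v / 2))
      simpa using this
    have := integral_Ioi_of_hasDerivAt_of_tendsto
      (Continuous.continuousWithinAt (by fun_prop)) hderiv hint htend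
    rw [this]
    ring
  have hS : MeasurableSet {z : ℂ | γ < ‖z‖} :=
    (isOpen_lt continuous_const continuous_norm).measurableSet
  set f : ℂ → ℝ := ({z : ℂ | γ < ‖z‖}).indicator (fun z => Real.exp (-‖z‖ ^ 2 / v)) with hf
  have h1 : ∫ z in {z : ℂ | γ < ‖z‖}, Real.exp (-‖z‖ ^ 2 / v) = ∫ z, f z :=
    (integral_indicator hS).symm
  rw [h1, ← Complex.integral_comp_polarCoord_symm f]
  have h2 : ∀ p ∈ polarCoord.target,
      p.1 • f (Complex.polarCoord.symm p) =
        (fun r => r * (Ioi γ).indicator (fun r => Real.exp (-r ^ 2 / v)) r) p.1 *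
          (fun _ : ℝ => (1:ℝ)) p.2 := by
    rintro ⟨r, θ⟩ ⟨hr, hθ⟩
    have habs : ‖Complex.polarCoord.symm (r, θ)‖ = r := by
      rw [Complex.norm_polarCoord_symm, abs_of_pos hr]
    simp only [smul_eq_mul, hf, indicator, mem_setOf_eq, habs, mem_Ioi, mul_one]
  rw [setIntegral_congr_fun polarCoord.open_target.measurableSet h2]
  have htarget : polarCoord.target = Ioi (0:ℝ) ×ˢ Ioo (-π) π := rfl
  rw [htarget, Measure.volume_eq_prod, setIntegral_prod_mul
    (fun r : ℝ => r * (Ioi γ).indicator (fun r => Real.exp (-r ^ 2 / v)) r)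
    (fun _ : ℝ => (1:ℝ)) (Ioi 0) (Ioo (-π) π)]
  have h3 : ∫ r in Ioi (0:ℝ), r * (Ioi γ).indicator (fun r => Real.exp (-r ^ 2 / v)) r =
      ∫ r in Ioi γ, r * Real.exp (-r ^ 2 / v) := by
    rw [show (fun r : ℝ => r * (Ioi γ).indicator (fun r => Real.exp (-r ^ 2 / v)) r) =
        (Ioi γ).indicator (fun r : ℝ => r * Real.exp (-r ^ 2 / v)) by
      funext r
      rw [indicator, indicator]
      split <;> simp]
    rw [setIntegral_indicator measurableSet_Ioi, Ioi_inter_Ioi, max_eq_right hγ.le]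
  rw [h3, hIoi]
  simp only [integral_const, MeasurableSet.univ, Measure.restrict_apply, univ_inter,
    Real.volume_Ioo, smul_eq_mul, mul_one]
  simp only [Measure.real, Measure.restrict_apply MeasurableSet.univ, univ_inter, Real.volume_Ioo]
  rw [ENNReal.toReal_ofReal (by linarith [Real.pi_pos])]
  ring

/-- The worst-case detection probability equals the false alarm rate: the infimum over
`a ∈ ℂ` of `P(a) = (1/(πv)) ∫_{|z|>γ} exp(-|z-a|²/v) dν(z)` is `exp(-γ²/v)`, attained at
`a = 0`. -/
theorem worst_case_detection (v γ : ℝ) (hv : 0 < v) (hγ : 0 < γ) :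
    IsLeast
      (Set.range fun a : ℂ => (1 / (Real.pi * v)) *
        ∫ z in {z : ℂ | γ < ‖z‖}, Real.exp (-‖z - a‖ ^ 2 / v))
      (Real.exp (-γ ^ 2 / v)) ∧
    (1 / (Real.pi * v)) *
        ∫ z in {z : ℂ | γ < ‖z‖}, Real.exp (-‖z - (0 : ℂ)‖ ^ 2 / v) =
      Real.exp (-γ ^ 2 / v) := by
  have hπ := Real.pi_pos
  have hv' : v ≠ 0 := hv.ne'
  have hπ' : π ≠ 0 := hπ.ne'
  have hP0 : ∫ z in {z : ℂ | γ < ‖z‖}, Real.exp (-‖z - (0:ℂ)‖ ^ 2 / v) =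
      π * v * Real.exp (-γ ^ 2 / v) := by
    simp only [sub_zero]
    exact worst_case_aux_P0 v γ hv hγ
  have h0 : (1 / (Real.pi * v)) *
      ∫ z in {z : ℂ | γ < ‖z‖}, Real.exp (-‖z - (0 : ℂ)‖ ^ 2 / v) =
      Real.exp (-γ ^ 2 / v) := by
    rw [hP0]
    field_simp
  have key : ∀ a : ℂ, Real.exp (-γ ^ 2 / v) ≤ (1 / (Real.pi * v)) *
      ∫ z in {z : ℂ | γ < ‖z‖}, Real.exp (-‖z - a‖ ^ 2 / v) := by
    intro a
    have heq : ∀ b : ℂ, ∫ z in {z : ℂ | γ < ‖z‖}, Real.exp (-‖z - b‖ ^ 2 / v) =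
        (∫⁻ z in {z : ℂ | γ < ‖z‖}, ENNReal.ofReal (Real.exp (-‖z - b‖ ^ 2 / v))).toReal := by
      intro b
      exact integral_eq_lintegral_of_nonneg_ae (ae_of_all _ fun z => (Real.exp_pos _).le)
        ((by fun_prop : Continuous fun z : ℂ =>
          Real.exp (-‖z - b‖ ^ 2 / v)).aestronglyMeasurable.restrict)
    have hfin : ∫⁻ z in {z : ℂ | γ < ‖z‖},
        ENNReal.ofReal (Real.exp (-‖z - a‖ ^ 2 / v)) ≠ ⊤ := by
      refine ((setLIntegral_le_lintegral _ _).trans_lt ?_).ne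
      exact (hasFiniteIntegral_iff_ofReal (ae_of_all _ fun z => (Real.exp_pos _).le)).1
        (worst_case_aux_integrable v hv a).hasFiniteIntegral
    have h1 : ∫ z in {z : ℂ | γ < ‖z‖}, Real.exp (-‖z - (0:ℂ)‖ ^ 2 / v) ≤
        ∫ z in {z : ℂ | γ < ‖z‖}, Real.exp (-‖z - a‖ ^ 2 / v) := by
      rw [heq 0, heq a]
      exact ENNReal.toReal_mono hfin (worst_case_aux_mono v γ hv a)
    rw [hP0] at h1
    calc Real.exp (-γ ^ 2 / v)
        = 1 / (π * v) * (π * v * Real.exp (-γ ^ 2 / v)) := by field_simp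
      _ ≤ _ := mul_le_mul_of_nonneg_left h1 (by positivity)
  refine ⟨⟨⟨0, h0⟩, ?_⟩, h0⟩
  rintro x ⟨a, rfl⟩
  exact key a
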